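/- Let z₁, z₂, …, z_{m−1} be independent random variables where zᵢ is geometrically distributed (on {1,2,3,…}) with success probability (N−i+1)/N, and let m = ⌈min{N,K}/4⌉ with N, K positive integers. Then the expectation of z = z₁ + ⋯ + z_{m−1} satisfies E(z) ≤ K/3. -/

import Mathlib

open MeasureTheory

lemma geom_aux {p : ℝ} (hp : 0 < p) (hp1 : p ≤ 1) :
    Summable (fun n : ℕ => ((n : ℝ) + 1) * ((1 - p) ^ n * p)) ∧
    ∑' n : ℕ, ((n : ℝ) + 1) * ((1 - p) ^ n * p) = 1 / p := by
  set q : ℝ := 1 - p with hq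
  have hq0 : 0 ≤ q := by simp only [hq]; linarith
  have hq1 : q < 1 := by simp only [hq]; linarith
  have hnorm : ‖q‖ < 1 := by rw [Real.norm_eq_abs, abs_of_nonneg hq0]; exact hq1
  have hs1 : Summable (fun n : ℕ => (n : ℝ) * q ^ n) := by
    simpa using summable_pow_mul_geometric_of_norm_lt_one 1 hnorm
  have hs2 : Summable (fun n : ℕ => q ^ n) := summable_geometric_of_lt_one hq0 hq1
  have hterm : ∀ n : ℕ, ((n : ℝ) + 1) * (q ^ n * p) = p * ((n : ℝ) * q ^ n) + p * q ^ n := by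
    intro n; ring
  have hsum : Summable (fun n : ℕ => ((n : ℝ) + 1) * (q ^ n * p)) := by
    apply Summable.congr ((hs1.mul_left p).add (hs2.mul_left p))
    intro n; rw [hterm n]
  refine ⟨hsum, ?_⟩
  rw [tsum_congr hterm, Summable.tsum_add (hs1.mul_left p) (hs2.mul_left p),
      tsum_mul_left, tsum_mul_left, tsum_coe_mul_geometric_of_norm_lt_one hnorm,
      tsum_geometric_of_lt_one hq0 hq1]
  have hpq : 1 - q = p := by simp [hq]
  rw [hpq, hq]
  field_simp
  ring

/-- If `z₁, …, z_{m−1}` are independent, `zᵢ` geometric on `{1,2,…}` with success probability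
`(N−i+1)/N`, and `m = ⌈min{N,K}/4⌉`, then `E(z₁ + ⋯ + z_{m−1}) ≤ K/3`. -/
theorem coupon_collector_expectation (N K : ℕ) (hN : 0 < N) (hK : 0 < K)
    {Ω : Type*} [MeasurableSpace Ω] (μ : Measure Ω) [IsProbabilityMeasure μ]
    (z : ℕ → Ω → ℕ) (hmeas : ∀ i, Measurable (z i))
    (m : ℕ) (hm : m = Nat.ceil ((min N K : ℝ) / 4))
    (hindep : ProbabilityTheory.iIndepFun z μ)
    (hgeom : ∀ i ∈ Finset.Icc 1 (m - 1), ∀ k : ℕ, 1 ≤ k →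
      μ {ω | z i ω = k} =
        ENNReal.ofReal
          ((1 - ((N : ℝ) - i + 1) / N) ^ (k - 1) * (((N : ℝ) - i + 1) / N))) :
    ∫ ω, (∑ i ∈ Finset.Icc 1 (m - 1), (z i ω : ℝ)) ∂μ ≤ K / 3 := by
  have hN' : (0:ℝ) < N := by exact_mod_cast hN
  -- bound on m
  have hmin0 : (0:ℝ) ≤ (min N K : ℝ) / 4 := by positivity
  have hmlt : (m : ℝ) < (min N K : ℝ) / 4 + 1 := by
    rw [hm]; exact Nat.ceil_lt_add_one hmin0
  -- key per-i bound
  have key : ∀ i ∈ Finset.Icc 1 (m - 1),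
      ∫⁻ ω, (z i ω : ENNReal) ∂μ ≤ ENNReal.ofReal (4/3) := by
    intro i hi
    obtain ⟨hi1, hi2⟩ := Finset.mem_Icc.mp hi
    have him : (i : ℝ) ≤ (m : ℝ) - 1 := by
      have : i ≤ m - 1 := hi2
      have hm1 : 1 ≤ m := le_trans hi1 (Nat.le_of_lt_succ (by omega))
      have := Nat.cast_le (α := ℝ) |>.mpr hi2
      push_cast [Nat.cast_sub hm1] at this
      linarith
    have hiN : (i : ℝ) < (N : ℝ) / 4 := by
      have h1 : (min N K : ℝ) ≤ (N : ℝ) := min_le_left _ _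
      linarith
    set p : ℝ := ((N : ℝ) - i + 1) / N with hpdef
    have hi1R : (1:ℝ) ≤ i := by exact_mod_cast hi1
    have hp34 : 3/4 < p := by
      rw [hpdef, lt_div_iff₀ hN']; linarith
    have hp : 0 < p := by linarith
    have hp1 : p ≤ 1 := by
      rw [hpdef, div_le_one hN']; linarith
    -- compute the lintegral
    have hc : ∫⁻ ω, (z i ω : ENNReal) ∂μ
        = ∑' n : ℕ, (n : ENNReal) * μ {ω | z i ω = n} := by
      rw [← lintegral_map (f := fun n : ℕ => (n : ENNReal)) measurable_from_top (hmeas i),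
          lintegral_countable']
      refine tsum_congr fun n => ?_
      rw [Measure.map_apply (hmeas i) (measurableSet_singleton n)]
      rfl
    rw [hc, tsum_eq_zero_add' ENNReal.summable]
    simp only [Nat.cast_zero, zero_mul, zero_add]
    obtain ⟨hsum, hval⟩ := geom_aux hp hp1
    have hq0 : (0:ℝ) ≤ 1 - p := by linarith
    calc ∑' n : ℕ, (((n + 1 : ℕ)) : ENNReal) * μ {ω | z i ω = n + 1}
        = ∑' n : ℕ, ENNReal.ofReal (((n : ℝ) + 1) * ((1 - p) ^ n * p)) := by
          refine tsum_congr fun n => ?_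
          rw [hgeom i hi (n + 1) (by omega), ← ENNReal.ofReal_natCast (n + 1),
            ← ENNReal.ofReal_mul (by positivity)]
          congr 1
          simp only [Nat.add_sub_cancel]
          push_cast
          ring
      _ = ENNReal.ofReal (∑' n : ℕ, ((n : ℝ) + 1) * ((1 - p) ^ n * p)) :=
          (ENNReal.ofReal_tsum_of_nonneg
            (fun n => mul_nonneg (by positivity) (mul_nonneg (pow_nonneg hq0 n) hp.le))
            hsum).symm
      _ = ENNReal.ofReal (1 / p) := by rw [hval]
      _ ≤ ENNReal.ofReal (4/3) := by
          apply ENNReal.ofReal_le_ofReal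
          rw [div_le_div_iff₀ hp (by norm_num)]
          linarith
  -- convert Bochner integral to lintegral
  have h0 : ∀ ω, 0 ≤ ∑ i ∈ Finset.Icc 1 (m - 1), (z i ω : ℝ) :=
    fun ω => Finset.sum_nonneg fun i _ => Nat.cast_nonneg _
  have hsm : AEStronglyMeasurable (fun ω => ∑ i ∈ Finset.Icc 1 (m - 1), (z i ω : ℝ)) μ := by
    apply Measurable.aestronglyMeasurable
    exact Finset.measurable_sum _ fun i _ => measurable_from_top.comp (hmeas i)
  rw [integral_eq_lintegral_of_nonneg_ae (Filter.Eventually.of_forall h0) hsm]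
  apply ENNReal.toReal_le_of_le_ofReal (by positivity)
  have heq : ∀ ω, ENNReal.ofReal (∑ i ∈ Finset.Icc 1 (m - 1), (z i ω : ℝ))
      = ∑ i ∈ Finset.Icc 1 (m - 1), (z i ω : ENNReal) := by
    intro ω
    rw [ENNReal.ofReal_sum_of_nonneg fun i _ => Nat.cast_nonneg _]
    exact Finset.sum_congr rfl fun i _ => ENNReal.ofReal_natCast _
  calc ∫⁻ ω, ENNReal.ofReal (∑ i ∈ Finset.Icc 1 (m - 1), (z i ω : ℝ)) ∂μ
      = ∑ i ∈ Finset.Icc 1 (m - 1), ∫⁻ ω, (z i ω : ENNReal) ∂μ := by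
        simp_rw [heq]
        exact lintegral_finset_sum _ fun i _ => measurable_from_top.comp (hmeas i)
    _ ≤ ∑ i ∈ Finset.Icc 1 (m - 1), ENNReal.ofReal (4/3) := Finset.sum_le_sum key
    _ = ((m - 1 : ℕ) : ENNReal) * ENNReal.ofReal (4/3) := by
        rw [Finset.sum_const, Nat.card_Icc]; simp [nsmul_eq_mul]
    _ = ENNReal.ofReal (((m - 1 : ℕ) : ℝ) * (4/3)) := by
        rw [ENNReal.ofReal_mul (by positivity), ENNReal.ofReal_natCast]
    _ ≤ ENNReal.ofReal ((K : ℝ) / 3) := by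
        apply ENNReal.ofReal_le_ofReal
        have h2 : (min N K : ℝ) ≤ (K : ℝ) := min_le_right _ _
        rcases Nat.eq_zero_or_pos m with hm0 | hm1
        · simp [hm0]; positivity
        · have : ((m - 1 : ℕ) : ℝ) = (m : ℝ) - 1 := by
            push_cast [Nat.cast_sub hm1]; ring
          rw [this]; nlinarith
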